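/- arXiv:1608.00107 — 5 statements merged into one kernel-verified Lean document; each statement's English description precedes it below -/
import Mathlib

section
/- Let π : ℝ² → ℝ be a nonnegative, bounded, continuous function with π(a,b) = 0 whenever a > b. Fix real numbers x̲ < x̄. For each integer m ≥ 2 define f_m(x̲,x̄) = ∫∫_{{(a,b) : a ≤ x̲, b ≥ x̄}} m(m−1)(x̄−x̲)^{m−2}(b−a)^{−m} π(a,b) da db. Then lim_{m→∞} f_m(x̲,x̄) = π(x̲,x̄). -/
open MeasureTheory Filter
open Set

set_option maxHeartbeats 1000000

lemma aux_deriv (a : ℝ) (m : ℕ) (hm : 2 ≤ m) (b : ℝ) (hb : a < b) :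
    HasDerivAt (fun b => -((b - a) ^ (m-1))⁻¹ / ((m-1 : ℕ) : ℝ)) (((b - a) ^ m)⁻¹) b := by
  have ht : (0:ℝ) < b - a := by linarith
  have h1 : HasDerivAt (fun b : ℝ => b - a) 1 b := (hasDerivAt_id b).sub_const a
  have h2 := h1.pow (m-1)
  have h3 := (h2.inv (pow_ne_zero _ ht.ne')).neg.div_const ((m-1 : ℕ) : ℝ)
  refine h3.congr_deriv (Eq.symm ?_)
  show ((b - a) ^ m)⁻¹ = -(-(((m-1:ℕ):ℝ) * (b - a) ^ (m - 1 - 1) * 1) / ((b - a) ^ (m - 1)) ^ 2) / ((m-1:ℕ):ℝ)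
  have hm1 : ((m-1 : ℕ) : ℝ) ≠ 0 := by
    have : 1 ≤ m - 1 := by omega
    positivity
  have e1 : ((b - a) ^ (m-1)) ^ 2 = (b - a) ^ (m-1-1) * (b - a) ^ m := by
    rw [← pow_mul, ← pow_add]; congr 1; omega
  rw [e1, mul_one, neg_div, neg_div, neg_div, neg_neg, div_div]
  have e2 : (b - a) ^ (m-1-1) * (b - a) ^ m * ((m-1 : ℕ) : ℝ) =
      (((m-1 : ℕ) : ℝ) * (b - a) ^ (m-1-1)) * ((b - a) ^ m) := by ring
  rw [e2, div_mul_cancel_left₀ (mul_ne_zero hm1 (pow_ne_zero _ ht.ne'))]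

lemma int_Ioi (a z : ℝ) (h : a < z) (m : ℕ) (hm : 2 ≤ m) :
    IntegrableOn (fun b => ((b - a) ^ m)⁻¹) (Ioi z) ∧
    ∫ b in Ioi z, ((b - a) ^ m)⁻¹ = ((z - a) ^ (m-1))⁻¹ / ((m-1 : ℕ) : ℝ) := by
  have hderiv : ∀ b ∈ Ici z, HasDerivAt (fun b => -((b - a) ^ (m-1))⁻¹ / ((m-1 : ℕ) : ℝ))
      (((b - a) ^ m)⁻¹) b := fun b hb => aux_deriv a m hm b (lt_of_lt_of_le h hb)
  have hpos : ∀ b ∈ Ioi z, 0 ≤ ((b - a) ^ m)⁻¹ := fun b hb => by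
    have : (0:ℝ) < b - a := by simp at hb; linarith
    positivity
  have htend : Tendsto (fun b => -((b - a) ^ (m-1))⁻¹ / ((m-1 : ℕ) : ℝ)) atTop (nhds 0) := by
    have h1 : Tendsto (fun b : ℝ => (b - a) ^ (m-1)) atTop atTop :=
      (tendsto_pow_atTop (by omega)).comp (tendsto_atTop_add_const_right _ (-a) tendsto_id)
    have := (h1.inv_tendsto_atTop).neg.div_const ((m-1 : ℕ) : ℝ)
    simpa using this
  refine ⟨integrableOn_Ioi_deriv_of_nonneg' hderiv hpos htend, ?_⟩
  rw [integral_Ioi_of_hasDerivAt_of_nonneg' hderiv hpos htend]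
  ring

lemma int_Iic (y z : ℝ) (h : y < z) (n : ℕ) (hn : 2 ≤ n) :
    IntegrableOn (fun a => ((z - a) ^ n)⁻¹) (Iic y) ∧
    ∫ a in Iic y, ((z - a) ^ n)⁻¹ = ((z - y) ^ (n-1))⁻¹ / ((n-1 : ℕ) : ℝ) := by
  obtain ⟨hint, hval⟩ := int_Ioi (-z) (-y) (by linarith) n hn
  have hfun : (fun a : ℝ => ((z - a) ^ n)⁻¹) = (fun t => ((t - (-z)) ^ n)⁻¹) ∘ (fun a : ℝ => -a) := by
    funext a; simp [Function.comp]; ring_nf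
  constructor
  · have A : MeasurableEmbedding (fun x : ℝ => -x) :=
      (Homeomorph.neg ℝ).isClosedEmbedding.measurableEmbedding
    have hmap : (volume : Measure ℝ).restrict (Ioi (-y))
        = Measure.map (fun x : ℝ => -x) (volume.restrict (Iio y)) := by
      conv_lhs => rw [← Measure.map_neg_eq_self (volume : Measure ℝ)]
      rw [Measure.restrict_map A.measurable measurableSet_Ioi]
      congr 1
      ext x
      simp
    rw [IntegrableOn, hmap, A.integrable_map_iff] at hint
    rw [hfun, integrableOn_Iic_iff_integrableOn_Iio]
    exact hint
  · have heq := integral_comp_neg_Iic y (fun t => ((t - (-z)) ^ n)⁻¹)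
    simp only [neg_sub_neg] at heq hval
    rw [heq, hval]

lemma int_prod (y z : ℝ) (h : y < z) (m : ℕ) (hm : 3 ≤ m) :
    IntegrableOn (fun q : ℝ × ℝ => ((q.2 - q.1) ^ m)⁻¹) (Iic y ×ˢ Ici z) ∧
    ∫ q in Iic y ×ˢ Ici z, ((q.2 - q.1) ^ m)⁻¹
      = ((z - y) ^ (m-2))⁻¹ / (((m-1 : ℕ) : ℝ) * ((m-2 : ℕ) : ℝ)) := by
  have hmeas : Measurable (fun q : ℝ × ℝ => ((q.2 - q.1) ^ m)⁻¹) :=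
    ((measurable_snd.sub measurable_fst).pow_const m).inv
  have hprod : (volume : Measure (ℝ × ℝ)).restrict (Iic y ×ˢ Ici z)
      = (volume.restrict (Iic y)).prod (volume.restrict (Ici z)) := by
    rw [Measure.volume_eq_prod, Measure.prod_restrict]
  -- inner integrability for each a ≤ y
  have hinner : ∀ a : ℝ, a ∈ Iic y → IntegrableOn (fun b => ((b - a) ^ m)⁻¹) (Ici z) := by
    intro a ha
    rw [integrableOn_Ici_iff_integrableOn_Ioi]
    exact (int_Ioi a z (lt_of_le_of_lt ha h) m (by omega)).1
  have hinnerval : ∀ a : ℝ, a ∈ Iic y →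
      ∫ b in Ici z, ((b - a) ^ m)⁻¹ = ((z - a) ^ (m-1))⁻¹ / ((m-1 : ℕ) : ℝ) := by
    intro a ha
    rw [integral_Ici_eq_integral_Ioi]
    exact (int_Ioi a z (lt_of_le_of_lt ha h) m (by omega)).2
  have houter := int_Iic y z h (m-1) (by omega)
  have houter' : IntegrableOn (fun a => ((z - a) ^ (m-1))⁻¹ / ((m-1 : ℕ) : ℝ)) (Iic y) :=
    houter.1.div_const _
  -- nonneg of values on the set
  have hnn : ∀ a ∈ Iic y, ∀ b ∈ Ici z, 0 ≤ ((b - a) ^ m)⁻¹ := by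
    intro a ha b hb
    have : (0:ℝ) < b - a := by
      simp only [mem_Iic] at ha; simp only [mem_Ici] at hb; linarith
    positivity
  have hint : IntegrableOn (fun q : ℝ × ℝ => ((q.2 - q.1) ^ m)⁻¹) (Iic y ×ˢ Ici z) := by
    rw [IntegrableOn, hprod]
    rw [integrable_prod_iff hmeas.aestronglyMeasurable]
    constructor
    · filter_upwards [ae_restrict_mem measurableSet_Iic] with a ha
      exact hinner a ha
    · apply houter'.congr_fun ?_ measurableSet_Iic
      intro a ha
      dsimp only
      rw [← hinnerval a ha]
      apply setIntegral_congr_fun measurableSet_Ici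
      intro b hb
      exact (Real.norm_of_nonneg (hnn a ha b hb)).symm
  refine ⟨hint, ?_⟩
  have hint' := hint
  rw [IntegrableOn, hprod] at hint'
  rw [hprod, integral_prod _ hint']
  have : ∫ a in Iic y, ∫ b in Ici z, ((b - a) ^ m)⁻¹
      = ∫ a in Iic y, ((z - a) ^ (m-1))⁻¹ / ((m-1 : ℕ) : ℝ) :=
    setIntegral_congr_fun measurableSet_Iic (fun a ha => hinnerval a ha)
  rw [this, integral_div, houter.2]
  have : m - 1 - 1 = m - 2 := by omega
  rw [this, div_div, mul_comm]

/-- **Theorem 6 of the paper.** Let `π : ℝ² → ℝ` be a nonnegative, bounded,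
continuous function with `π(a,b) = 0` whenever `a > b`. Fix `x̲ < x̄`. For each integer
`m ≥ 2` let
`f_m(x̲,x̄) = ∫∫_{a ≤ x̲, b ≥ x̄} m(m−1)(x̄−x̲)^{m−2}(b−a)^{−m} π(a,b) da db`.
Then `f_m(x̲,x̄) → π(x̲,x̄)` as `m → ∞`. -/
theorem generative_tendsto_descriptive_uniform
    (π : ℝ × ℝ → ℝ) (hπ_nonneg : ∀ q, 0 ≤ π q) (hπ_bdd : ∃ M : ℝ, ∀ q, π q ≤ M)
    (hπ_cont : Continuous π) (hπ_zero : ∀ a b : ℝ, b < a → π (a, b) = 0)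
    (xl xu : ℝ) (hx : xl < xu) :
    Tendsto (fun m : ℕ =>
        ∫ q in {q : ℝ × ℝ | q.1 ≤ xl ∧ xu ≤ q.2},
          (m : ℝ) * ((m : ℝ) - 1) * (xu - xl) ^ (m - 2) * ((q.2 - q.1) ^ m)⁻¹ * π q)
      atTop (nhds (π (xl, xu))) := by
  obtain ⟨M, hM⟩ := hπ_bdd
  set π₀ : ℝ := π (xl, xu) with hπ₀def
  have hπ₀ : 0 ≤ π₀ := hπ_nonneg _
  have hMπ₀ : π₀ ≤ M := hM _
  have hM0 : 0 ≤ M := le_trans hπ₀ hMπ₀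
  set L : ℝ := xu - xl with hLdef
  have hL : 0 < L := by simp [hLdef]; linarith
  have hset : {q : ℝ × ℝ | q.1 ≤ xl ∧ xu ≤ q.2} = Iic xl ×ˢ Ici xu := rfl
  rw [Metric.tendsto_atTop]
  intro ε hε
  -- continuity at (xl, xu)
  obtain ⟨δ', hδ', hδprop⟩ := Metric.continuousAt_iff.mp hπ_cont.continuousAt (ε/9) (by positivity)
  set δ : ℝ := δ'/2 with hδdef
  have hδ : 0 < δ := by positivity
  have hnear : ∀ q : ℝ × ℝ, q ∈ Icc (xl-δ) xl ×ˢ Icc xu (xu+δ) → |π q - π₀| ≤ ε/9 := by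
    rintro ⟨a, b⟩ ⟨ha, hb⟩
    simp only [mem_Icc] at ha hb
    have hdist : dist (a, b) (xl, xu) < δ' := by
      rw [Prod.dist_eq]
      have h1 : dist a xl ≤ δ := by rw [Real.dist_eq]; rw [abs_le]; constructor <;> linarith [ha.1, ha.2]
      have h2 : dist b xu ≤ δ := by rw [Real.dist_eq]; rw [abs_le]; constructor <;> linarith [hb.1, hb.2]
      have : max (dist a xl) (dist b xu) ≤ δ := max_le h1 h2
      have hδδ' : δ < δ' := by rw [hδdef]; linarith
      exact lt_of_le_of_lt this hδδ'
    have := hδprop hdist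
    rw [Real.dist_eq] at this
    exact le_of_lt this
  set ρ : ℝ := L / (L + δ) with hρdef
  have hρ0 : 0 ≤ ρ := by positivity
  have hρ1 : ρ < 1 := by
    rw [hρdef, div_lt_one (by linarith)]; linarith
  -- the tail bound tends to zero
  set t : ℕ → ℝ := fun m => (M + π₀) * 6 * ρ ^ (m - 2) + π₀ * (2 / ((m : ℝ) - 2)) with htdef
  have htail : Tendsto t atTop (nhds 0) := by
    have h1 : Tendsto (fun m : ℕ => ρ ^ (m - 2)) atTop (nhds 0) :=
      (tendsto_pow_atTop_nhds_zero_of_lt_one hρ0 hρ1).comp (tendsto_sub_atTop_nat 2)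
    have h2 : Tendsto (fun m : ℕ => 2 / ((m : ℝ) - 2)) atTop (nhds 0) := by
      apply Tendsto.div_atTop tendsto_const_nhds
      exact tendsto_atTop_add_const_right _ (-2) tendsto_natCast_atTop_atTop
    have := ((h1.const_mul ((M + π₀) * 6)).add (h2.const_mul π₀))
    simpa using this
  have hεt : ∀ᶠ m : ℕ in atTop, t m < ε / 3 :=
    htail.eventually_lt_const (by linarith)
  obtain ⟨N1, hN1⟩ := eventually_atTop.mp hεt
  refine ⟨max N1 3, fun m hm => ?_⟩
  have hm3 : 3 ≤ m := le_trans (le_max_right _ _) hm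
  have htm : t m < ε / 3 := hN1 m (le_trans (le_max_left _ _) hm)
  have hc1 : ((m-1 : ℕ) : ℝ) = (m:ℝ) - 1 := by
    rw [Nat.cast_sub (by omega)]; simp
  have hc2 : ((m-2 : ℕ) : ℝ) = (m:ℝ) - 2 := by
    rw [Nat.cast_sub (by omega)]; simp
  have hmr : (3:ℝ) ≤ (m:ℝ) := by exact_mod_cast hm3
  have hm2pos : (0:ℝ) < (m:ℝ) - 2 := by linarith
  have hm1pos : (0:ℝ) < (m:ℝ) - 1 := by linarith
  set cm : ℝ := (m:ℝ) * ((m:ℝ) - 1) * L ^ (m-2) with hcmdef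
  have hcm0 : 0 ≤ cm := by
    apply mul_nonneg (mul_nonneg (by positivity) (by linarith)) (by positivity)
  -- integrability and values from int_prod
  obtain ⟨hS_int, hS_val⟩ := int_prod xl xu hx m hm3
  obtain ⟨hA1_int, hA1_val⟩ := int_prod (xl-δ) xu (by linarith) m hm3
  obtain ⟨hA2_int, hA2_val⟩ := int_prod xl (xu+δ) (by linarith) m hm3
  have he1 : xu - (xl - δ) = L + δ := by rw [hLdef]; ring
  have he2 : xu + δ - xl = L + δ := by rw [hLdef]; ring
  rw [he1] at hA1_val
  rw [he2] at hA2_val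
  rw [show xu - xl = L from rfl] at hS_val
  -- subset relations
  have hSnS : Icc (xl-δ) xl ×ˢ Icc xu (xu+δ) ⊆ Iic xl ×ˢ Ici xu :=
    prod_mono Icc_subset_Iic_self Icc_subset_Ici_self
  have hA1S : Iic (xl-δ) ×ˢ Ici xu ⊆ Iic xl ×ˢ Ici xu :=
    prod_mono (Iic_subset_Iic.mpr (by linarith)) (subset_refl _)
  have hA2S : Iic xl ×ˢ Ici (xu+δ) ⊆ Iic xl ×ˢ Ici xu :=
    prod_mono (subset_refl _) (Ici_subset_Ici.mpr (by linarith))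
  have hkm_nonneg : ∀ q : ℝ × ℝ, q ∈ Iic xl ×ˢ Ici xu → 0 ≤ ((q.2 - q.1) ^ m)⁻¹ := by
    rintro ⟨a, b⟩ ⟨ha, hb⟩
    simp only [mem_Iic] at ha; simp only [mem_Ici] at hb
    have : (0:ℝ) < b - a := by linarith
    positivity
  have hS_meas : MeasurableSet (Iic xl ×ˢ Ici xu : Set (ℝ × ℝ)) :=
    measurableSet_Iic.prod measurableSet_Ici
  have hSn_meas : MeasurableSet (Icc (xl-δ) xl ×ˢ Icc xu (xu+δ) : Set (ℝ × ℝ)) :=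
    measurableSet_Icc.prod measurableSet_Icc
  -- integrability of the product with π
  have hπm : AEStronglyMeasurable π (volume.restrict (Iic xl ×ˢ Ici xu)) :=
    hπ_cont.aestronglyMeasurable.restrict
  have hPS : IntegrableOn (fun q : ℝ × ℝ => ((q.2 - q.1) ^ m)⁻¹ * π q) (Iic xl ×ˢ Ici xu) := by
    have := hS_int.bdd_mul hπm (c := M) (Filter.Eventually.of_forall fun q => by
      rw [Real.norm_eq_abs, abs_of_nonneg (hπ_nonneg q)]; exact hM q)
    exact this.congr (Filter.Eventually.of_forall (fun q => mul_comm _ _))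
  have hSn_int := hS_int.mono_set hSnS
  have hSf_int := hS_int.mono_set (diff_subset : _ \ Icc (xl-δ) xl ×ˢ Icc xu (xu+δ) ⊆ _)
  have hPSn := hPS.mono_set hSnS
  have hPSf := hPS.mono_set (diff_subset : _ \ Icc (xl-δ) xl ×ˢ Icc xu (xu+δ) ⊆ _)
  -- splitting into near and far parts
  have hsplitk := integral_diff hSn_meas hS_int hSnS
  have hsplitp := integral_diff hSn_meas hPS hSnS
  -- near estimate
  have hB1 : |(∫ q in Icc (xl-δ) xl ×ˢ Icc xu (xu+δ), ((q.2 - q.1) ^ m)⁻¹ * π q)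
      - π₀ * ∫ q in Icc (xl-δ) xl ×ˢ Icc xu (xu+δ), ((q.2 - q.1) ^ m)⁻¹|
      ≤ ε/9 * ∫ q in Icc (xl-δ) xl ×ˢ Icc xu (xu+δ), ((q.2 - q.1) ^ m)⁻¹ := by
    have heq : (∫ q in Icc (xl-δ) xl ×ˢ Icc xu (xu+δ), ((q.2 - q.1) ^ m)⁻¹ * π q)
        - π₀ * ∫ q in Icc (xl-δ) xl ×ˢ Icc xu (xu+δ), ((q.2 - q.1) ^ m)⁻¹
        = ∫ q in Icc (xl-δ) xl ×ˢ Icc xu (xu+δ),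
            (((q.2 - q.1) ^ m)⁻¹ * π q - π₀ * ((q.2 - q.1) ^ m)⁻¹) := by
      rw [integral_sub hPSn (hSn_int.const_mul π₀), integral_const_mul]
    rw [heq]
    have hbound : ‖∫ q in Icc (xl-δ) xl ×ˢ Icc xu (xu+δ),
        (((q.2 - q.1) ^ m)⁻¹ * π q - π₀ * ((q.2 - q.1) ^ m)⁻¹)‖
        ≤ ∫ q in Icc (xl-δ) xl ×ˢ Icc xu (xu+δ), (ε/9 * ((q.2 - q.1) ^ m)⁻¹) := by
      refine norm_integral_le_of_norm_le (hSn_int.const_mul (ε/9)) ?_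
      filter_upwards [ae_restrict_mem hSn_meas] with q hq
      have hk0 : 0 ≤ ((q.2 - q.1) ^ m)⁻¹ := hkm_nonneg q (hSnS hq)
      have hp : |π q - π₀| ≤ ε/9 := hnear q hq
      have hrw : ((q.2 - q.1) ^ m)⁻¹ * π q - π₀ * ((q.2 - q.1) ^ m)⁻¹
          = ((q.2 - q.1) ^ m)⁻¹ * (π q - π₀) := by ring
      rw [Real.norm_eq_abs, hrw, abs_mul, abs_of_nonneg hk0, mul_comm]
      exact mul_le_mul_of_nonneg_right hp hk0
    rw [Real.norm_eq_abs] at hbound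
    rwa [integral_const_mul] at hbound
  -- nonnegativity facts
  have hkm_ae_S : 0 ≤ᵐ[volume.restrict (Iic xl ×ˢ Ici xu)]
      (fun q : ℝ × ℝ => ((q.2 - q.1) ^ m)⁻¹) := by
    filter_upwards [ae_restrict_mem hS_meas] with q hq using hkm_nonneg q hq
  have hISn_nonneg : 0 ≤ ∫ q in Icc (xl-δ) xl ×ˢ Icc xu (xu+δ), ((q.2 - q.1) ^ m)⁻¹ :=
    setIntegral_nonneg hSn_meas (fun q hq => hkm_nonneg q (hSnS hq))
  have hISn_le : (∫ q in Icc (xl-δ) xl ×ˢ Icc xu (xu+δ), ((q.2 - q.1) ^ m)⁻¹)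
      ≤ ∫ q in Iic xl ×ˢ Ici xu, ((q.2 - q.1) ^ m)⁻¹ :=
    setIntegral_mono_set hS_int hkm_ae_S hSnS.eventuallyLE
  -- far region is inside the union of the two tail regions
  have hSfsub : (Iic xl ×ˢ Ici xu) \ (Icc (xl-δ) xl ×ˢ Icc xu (xu+δ))
      ⊆ (Iic (xl-δ) ×ˢ Ici xu) ∪ (Iic xl ×ˢ Ici (xu+δ)) := by
    rintro ⟨a, b⟩ ⟨⟨ha, hb⟩, hnot⟩
    simp only [mem_Iic] at ha
    simp only [mem_Ici] at hb
    by_cases h1 : xl - δ ≤ a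
    · right
      refine ⟨ha, ?_⟩
      simp only [mem_Ici]
      by_contra h2
      push_neg at h2
      exact hnot ⟨⟨h1, ha⟩, ⟨hb, le_of_lt h2⟩⟩
    · left
      push_neg at h1
      exact ⟨le_of_lt h1, hb⟩
  have hA1_meas : MeasurableSet (Iic (xl-δ) ×ˢ Ici xu : Set (ℝ × ℝ)) :=
    measurableSet_Iic.prod measurableSet_Ici
  have hA2_meas : MeasurableSet (Iic xl ×ˢ Ici (xu+δ) : Set (ℝ × ℝ)) :=
    measurableSet_Iic.prod measurableSet_Ici
  have hU_int : IntegrableOn (fun q : ℝ × ℝ => ((q.2 - q.1) ^ m)⁻¹)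
      ((Iic (xl-δ) ×ˢ Ici xu) ∪ (Iic xl ×ˢ Ici (xu+δ))) := hA1_int.union hA2_int
  have hkm_ae_U : 0 ≤ᵐ[volume.restrict ((Iic (xl-δ) ×ˢ Ici xu) ∪ (Iic xl ×ˢ Ici (xu+δ)))]
      (fun q : ℝ × ℝ => ((q.2 - q.1) ^ m)⁻¹) := by
    filter_upwards [ae_restrict_mem (hA1_meas.union hA2_meas)] with q hq
    rcases hq with hq | hq
    · exact hkm_nonneg q (hA1S hq)
    · exact hkm_nonneg q (hA2S hq)
  have hkm_ae_A2 : 0 ≤ᵐ[volume.restrict (Iic xl ×ˢ Ici (xu+δ))]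
      (fun q : ℝ × ℝ => ((q.2 - q.1) ^ m)⁻¹) := by
    filter_upwards [ae_restrict_mem hA2_meas] with q hq using hkm_nonneg q (hA2S hq)
  have hISf_le : (∫ q in (Iic xl ×ˢ Ici xu) \ (Icc (xl-δ) xl ×ˢ Icc xu (xu+δ)),
        ((q.2 - q.1) ^ m)⁻¹)
      ≤ (∫ q in Iic (xl-δ) ×ˢ Ici xu, ((q.2 - q.1) ^ m)⁻¹)
        + ∫ q in Iic xl ×ˢ Ici (xu+δ), ((q.2 - q.1) ^ m)⁻¹ := by
    have step1 := setIntegral_mono_set hU_int hkm_ae_U hSfsub.eventuallyLE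
    have hunion_eq : (Iic (xl-δ) ×ˢ Ici xu) ∪ (Iic xl ×ˢ Ici (xu+δ))
        = (Iic (xl-δ) ×ˢ Ici xu) ∪ ((Iic xl ×ˢ Ici (xu+δ)) \ (Iic (xl-δ) ×ˢ Ici xu)) :=
      (union_diff_self).symm
    have step2 : (∫ q in (Iic (xl-δ) ×ˢ Ici xu) ∪ (Iic xl ×ˢ Ici (xu+δ)),
          ((q.2 - q.1) ^ m)⁻¹)
        = (∫ q in Iic (xl-δ) ×ˢ Ici xu, ((q.2 - q.1) ^ m)⁻¹)
          + ∫ q in (Iic xl ×ˢ Ici (xu+δ)) \ (Iic (xl-δ) ×ˢ Ici xu), ((q.2 - q.1) ^ m)⁻¹ := by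
      rw [hunion_eq]
      exact setIntegral_union disjoint_sdiff_self_right (hA2_meas.diff hA1_meas) hA1_int
        (hA2_int.mono_set diff_subset)
    have step3 : (∫ q in (Iic xl ×ˢ Ici (xu+δ)) \ (Iic (xl-δ) ×ˢ Ici xu), ((q.2 - q.1) ^ m)⁻¹)
        ≤ ∫ q in Iic xl ×ˢ Ici (xu+δ), ((q.2 - q.1) ^ m)⁻¹ :=
      setIntegral_mono_set hA2_int hkm_ae_A2 diff_subset.eventuallyLE
    rw [step2] at step1
    linarith
  have hISf_nonneg : 0 ≤ ∫ q in (Iic xl ×ˢ Ici xu) \ (Icc (xl-δ) xl ×ˢ Icc xu (xu+δ)),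
      ((q.2 - q.1) ^ m)⁻¹ :=
    setIntegral_nonneg (hS_meas.diff hSn_meas) (fun q hq => hkm_nonneg q hq.1)
  -- far estimate on the π-integral
  have hB4 : |∫ q in (Iic xl ×ˢ Ici xu) \ (Icc (xl-δ) xl ×ˢ Icc xu (xu+δ)),
        ((q.2 - q.1) ^ m)⁻¹ * π q|
      ≤ M * ∫ q in (Iic xl ×ˢ Ici xu) \ (Icc (xl-δ) xl ×ˢ Icc xu (xu+δ)),
        ((q.2 - q.1) ^ m)⁻¹ := by
    have hbound : ‖∫ q in (Iic xl ×ˢ Ici xu) \ (Icc (xl-δ) xl ×ˢ Icc xu (xu+δ)),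
        ((q.2 - q.1) ^ m)⁻¹ * π q‖
        ≤ ∫ q in (Iic xl ×ˢ Ici xu) \ (Icc (xl-δ) xl ×ˢ Icc xu (xu+δ)),
          (M * ((q.2 - q.1) ^ m)⁻¹) := by
      refine norm_integral_le_of_norm_le (hSf_int.const_mul M) ?_
      filter_upwards [ae_restrict_mem (hS_meas.diff hSn_meas)] with q hq
      have hk0 : 0 ≤ ((q.2 - q.1) ^ m)⁻¹ := hkm_nonneg q hq.1
      rw [Real.norm_eq_abs, abs_mul, abs_of_nonneg hk0, abs_of_nonneg (hπ_nonneg q), mul_comm]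
      exact mul_le_mul_of_nonneg_right (hM q) hk0
    rw [Real.norm_eq_abs] at hbound
    rwa [integral_const_mul] at hbound
  -- values of the constant multiples
  have hLp : (0:ℝ) < L ^ (m-2) := by positivity
  have hLδp : (0:ℝ) < (L + δ) ^ (m-2) := by positivity
  have hρpow : ρ ^ (m-2) = L ^ (m-2) / (L + δ) ^ (m-2) := by rw [hρdef, div_pow]
  have hrS : cm * (∫ q in Iic xl ×ˢ Ici xu, ((q.2 - q.1) ^ m)⁻¹) = (m:ℝ)/((m:ℝ)-2) := by
    rw [hS_val, hc1, hc2, hcmdef]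
    field_simp
  have hrA1 : cm * (∫ q in Iic (xl-δ) ×ˢ Ici xu, ((q.2 - q.1) ^ m)⁻¹)
      = (m:ℝ)/((m:ℝ)-2) * ρ ^ (m-2) := by
    rw [hA1_val, hc1, hc2, hcmdef, hρpow]
    field_simp
  have hrA2 : cm * (∫ q in Iic xl ×ˢ Ici (xu+δ), ((q.2 - q.1) ^ m)⁻¹)
      = (m:ℝ)/((m:ℝ)-2) * ρ ^ (m-2) := by
    rw [hA2_val, hc1, hc2, hcmdef, hρpow]
    field_simp
  have hr3 : (m:ℝ)/((m:ℝ)-2) ≤ 3 := by rw [div_le_iff₀ hm2pos]; linarith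
  have hρp0 : 0 ≤ ρ ^ (m-2) := pow_nonneg hρ0 _
  -- abbreviations
  set IS := ∫ q in Iic xl ×ˢ Ici xu, ((q.2 - q.1) ^ m)⁻¹ with hISdef
  set ISn := ∫ q in Icc (xl-δ) xl ×ˢ Icc xu (xu+δ), ((q.2 - q.1) ^ m)⁻¹ with hISndef
  set ISf := ∫ q in (Iic xl ×ˢ Ici xu) \ (Icc (xl-δ) xl ×ˢ Icc xu (xu+δ)),
    ((q.2 - q.1) ^ m)⁻¹ with hISfdef
  set IA1 := ∫ q in Iic (xl-δ) ×ˢ Ici xu, ((q.2 - q.1) ^ m)⁻¹ with hIA1def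
  set IA2 := ∫ q in Iic xl ×ˢ Ici (xu+δ), ((q.2 - q.1) ^ m)⁻¹ with hIA2def
  set F := ∫ q in Iic xl ×ˢ Ici xu, ((q.2 - q.1) ^ m)⁻¹ * π q with hFdef
  set PSn := ∫ q in Icc (xl-δ) xl ×ˢ Icc xu (xu+δ), ((q.2 - q.1) ^ m)⁻¹ * π q with hPSndef
  set PSf := ∫ q in (Iic xl ×ˢ Ici xu) \ (Icc (xl-δ) xl ×ˢ Icc xu (xu+δ)),
    ((q.2 - q.1) ^ m)⁻¹ * π q with hPSfdef
  -- rewrite the goal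
  rw [hset, Real.dist_eq]
  have hgoal_eq : (∫ q in Iic xl ×ˢ Ici xu, cm * ((q.2 - q.1) ^ m)⁻¹ * π q) = cm * F := by
    rw [hFdef]
    simp only [mul_assoc]
    exact integral_const_mul cm _
  rw [hgoal_eq]
  -- main chain
  have hXeq : cm * F - π₀ * ((m:ℝ)/((m:ℝ)-2))
      = cm * ((PSn - π₀ * ISn) + (PSf - π₀ * ISf)) := by
    rw [← hrS, hsplitp, hsplitk]
    ring
  have hPSfabs := abs_le.mp hB4
  have hπISf : 0 ≤ π₀ * ISf := mul_nonneg hπ₀ hISf_nonneg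
  have hXbound : |(PSn - π₀ * ISn) + (PSf - π₀ * ISf)|
      ≤ ε/9 * ISn + (M * ISf + π₀ * ISf) := by
    have h1 : |PSf - π₀ * ISf| ≤ M * ISf + π₀ * ISf := by
      rw [abs_le]
      constructor <;> linarith [hPSfabs.1, hPSfabs.2]
    calc |(PSn - π₀ * ISn) + (PSf - π₀ * ISf)|
        ≤ |PSn - π₀ * ISn| + |PSf - π₀ * ISf| := abs_add_le _ _
      _ ≤ ε/9 * ISn + (M * ISf + π₀ * ISf) := add_le_add hB1 h1
  have hcmISn : cm * ISn ≤ 3 :=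
    le_trans (le_trans (mul_le_mul_of_nonneg_left hISn_le hcm0) (le_of_eq hrS)) hr3
  have hcmISn0 : 0 ≤ cm * ISn := mul_nonneg hcm0 hISn_nonneg
  have hcmISf : cm * ISf ≤ 6 * ρ ^ (m-2) := by
    have h1 : cm * ISf ≤ cm * (IA1 + IA2) := mul_le_mul_of_nonneg_left hISf_le hcm0
    have h2 : cm * (IA1 + IA2) = (m:ℝ)/((m:ℝ)-2) * ρ ^ (m-2) + (m:ℝ)/((m:ℝ)-2) * ρ ^ (m-2) := by
      rw [mul_add, hrA1, hrA2]
    have h3 : (m:ℝ)/((m:ℝ)-2) * ρ ^ (m-2) ≤ 3 * ρ ^ (m-2) :=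
      mul_le_mul_of_nonneg_right hr3 hρp0
    linarith
  have hcmISf0 : 0 ≤ cm * ISf := mul_nonneg hcm0 hISf_nonneg
  have hX : |cm * F - π₀ * ((m:ℝ)/((m:ℝ)-2))| ≤ ε/3 + (M + π₀) * 6 * ρ ^ (m-2) := by
    rw [hXeq, abs_mul, abs_of_nonneg hcm0]
    have h1 : cm * |(PSn - π₀ * ISn) + (PSf - π₀ * ISf)|
        ≤ cm * (ε/9 * ISn + (M * ISf + π₀ * ISf)) :=
      mul_le_mul_of_nonneg_left hXbound hcm0
    have h2 : cm * (ε/9 * ISn + (M * ISf + π₀ * ISf))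
        = ε/9 * (cm * ISn) + (M * (cm * ISf) + π₀ * (cm * ISf)) := by ring
    have h3 : ε/9 * (cm * ISn) ≤ ε/9 * 3 :=
      mul_le_mul_of_nonneg_left hcmISn (by positivity)
    have h4 : M * (cm * ISf) ≤ M * (6 * ρ ^ (m-2)) :=
      mul_le_mul_of_nonneg_left hcmISf hM0
    have h5 : π₀ * (cm * ISf) ≤ π₀ * (6 * ρ ^ (m-2)) :=
      mul_le_mul_of_nonneg_left hcmISf hπ₀
    have h6 : (M + π₀) * 6 * ρ ^ (m-2) = M * (6 * ρ ^ (m-2)) + π₀ * (6 * ρ ^ (m-2)) := by ring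
    linarith
  have hY : |π₀ * ((m:ℝ)/((m:ℝ)-2)) - π₀| = π₀ * (2 / ((m:ℝ)-2)) := by
    have heq : π₀ * ((m:ℝ)/((m:ℝ)-2)) - π₀ = π₀ * (2 / ((m:ℝ)-2)) := by
      field_simp
      ring
    rw [heq]
    exact abs_of_nonneg (mul_nonneg hπ₀ (by positivity))
  have htriangle : |cm * F - π₀| ≤ |cm * F - π₀ * ((m:ℝ)/((m:ℝ)-2))|
      + |π₀ * ((m:ℝ)/((m:ℝ)-2)) - π₀| := abs_sub_le _ _ _
  rw [htdef] at htm
  simp only at htm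
  rw [hY] at htriangle
  linarith [hX, htriangle, htm]
end

section
/- The Borel σ-algebra of 𝕀 (generated by the subspace topology that 𝕀 inherits from ℝ²) equals the σ-algebra on 𝕀 generated by the collection 𝓕 = { {[x'] ⊆ [x]} : [x] ∈ 𝕀 } of all containment sets. -/
open MeasurableSpace MeasureTheory Set

/-- The Borel σ-algebra of `𝕀 = {(x̲,x̄) ∈ ℝ² : x̲ ≤ x̄}` (generated by
the subspace topology inherited from ℝ²) equals the σ-algebra generated by the collection
`𝓕 = { {[x'] ⊆ [x]} : [x] ∈ 𝕀 }` of all containment sets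
`{[x'] ⊆ [x]} = {(u,v) ∈ 𝕀 : x̲ ≤ u ≤ v ≤ x̄}`. -/
theorem borel_eq_generateFrom_containment_sets :
    borel {p : ℝ × ℝ // p.1 ≤ p.2} =
      MeasurableSpace.generateFrom
        {s : Set {p : ℝ × ℝ // p.1 ≤ p.2} |
          ∃ x : {p : ℝ × ℝ // p.1 ≤ p.2},
            s = {y : {p : ℝ × ℝ // p.1 ≤ p.2} | x.1.1 ≤ y.1.1 ∧ y.1.2 ≤ x.1.2}} := by
  set S := {p : ℝ × ℝ // p.1 ≤ p.2} with hSdef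
  set 𝓕 : Set (Set S) :=
    {s : Set S | ∃ x : S, s = {y : S | x.1.1 ≤ y.1.1 ∧ y.1.2 ≤ x.1.2}} with h𝓕
  have hgen : ∀ (a b : ℝ), a ≤ b →
      @MeasurableSet S (generateFrom 𝓕) {y : S | a ≤ y.1.1 ∧ y.1.2 ≤ b} := by
    intro a b hab
    exact measurableSet_generateFrom ⟨⟨(a, b), hab⟩, rfl⟩
  have hfst : ∀ a : ℝ, @MeasurableSet S (generateFrom 𝓕) {y : S | a ≤ y.1.1} := by
    intro a
    have he : {y : S | a ≤ y.1.1} =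
        ⋃ n : ℕ, {y : S | a ≤ y.1.1 ∧ y.1.2 ≤ max a n} := by
      ext y
      simp only [mem_setOf_eq, mem_iUnion]
      constructor
      · intro h
        obtain ⟨n, hn⟩ := exists_nat_ge y.1.2
        exact ⟨n, h, hn.trans (le_max_right _ _)⟩
      · rintro ⟨n, h, -⟩; exact h
    rw [he]
    exact MeasurableSet.iUnion fun n => hgen _ _ (le_max_left _ _)
  have hsnd : ∀ b : ℝ, @MeasurableSet S (generateFrom 𝓕) {y : S | y.1.2 ≤ b} := by
    intro b
    have he : {y : S | y.1.2 ≤ b} =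
        ⋃ n : ℕ, {y : S | min b (-(n : ℝ)) ≤ y.1.1 ∧ y.1.2 ≤ b} := by
      ext y
      simp only [mem_setOf_eq, mem_iUnion]
      constructor
      · intro h
        obtain ⟨n, hn⟩ := exists_nat_ge (-y.1.1)
        exact ⟨n, (min_le_right _ _).trans (by linarith), h⟩
      · rintro ⟨n, -, h⟩; exact h
    rw [he]
    exact MeasurableSet.iUnion fun n => hgen _ _ (min_le_left _ _)
  have hRi : (Real.measurableSpace) = generateFrom (Set.range Set.Ici) :=
    borel_eq_generateFrom_Ici ℝ
  have hRd : (Real.measurableSpace) = generateFrom (Set.range Set.Iic) :=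
    borel_eq_generateFrom_Iic ℝ
  have mfst : @Measurable S ℝ (generateFrom 𝓕) Real.measurableSpace (fun y => y.1.1) := by
    rw [hRi]
    exact @measurable_generateFrom S ℝ (generateFrom 𝓕) _ _
      (by rintro t ⟨a, rfl⟩; exact hfst a)
  have msnd : @Measurable S ℝ (generateFrom 𝓕) Real.measurableSpace (fun y => y.1.2) := by
    rw [hRd]
    exact @measurable_generateFrom S ℝ (generateFrom 𝓕) _ _
      (by rintro t ⟨b, rfl⟩; exact hsnd b)
  have mval : @Measurable S (ℝ × ℝ) (generateFrom 𝓕) Prod.instMeasurableSpace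
      (Subtype.val : S → ℝ × ℝ) :=
    @Measurable.prodMk S (generateFrom 𝓕) ℝ ℝ _ _ _ _ mfst msnd
  have hborel : borel S = (borel (ℝ × ℝ)).comap (Subtype.val : S → ℝ × ℝ) := borel_comap
  have hprod : (Prod.instMeasurableSpace : MeasurableSpace (ℝ × ℝ)) = borel (ℝ × ℝ) :=
    BorelSpace.measurable_eq
  refine le_antisymm ?_ (generateFrom_le ?_)
  · rw [hborel]
    intro s hs
    obtain ⟨t, ht, rfl⟩ := hs
    rw [← hprod] at ht
    exact mval ht
  · rintro s ⟨x, rfl⟩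
    rw [hborel]
    refine ⟨{p : ℝ × ℝ | x.1.1 ≤ p.1 ∧ p.2 ≤ x.1.2}, ?_, rfl⟩
    rw [← hprod]
    exact ((isClosed_Ici.preimage continuous_fst).inter
      (isClosed_Iic.preimage continuous_snd)).measurableSet
end

section
/- Let f : ℝ → [0,∞) be a measurable probability density (∫_ℝ f dλ = 1) with cumulative distribution function F(x) = ∫_{−∞}^x f(t) dt, and let μ = f·λ. Fix an integer m ≥ 2 and let T : ℝ^m → ℝ² map x to (min_{1≤k≤m} x_k, max_{1≤k≤m} x_k). Then the pushforward of the product measure μ^{⊗m} under T is absolutely continuous with respect to two-dimensional Lebesgue measure, with density g(a,b) = m(m−1)·(F(b) − F(a))^{m−2}·f(a)·f(b) for a ≤ b, and g(a,b) = 0 for a > b. -/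
open MeasureTheory Set

namespace MinMaxAux
variable {f F : ℝ → ℝ}

lemma hfi' (hf_prob : ∫ x, f x = 1) : Integrable f := by
  by_contra h; rw [integral_undef h] at hf_prob; norm_num at hf_prob

lemma F_mono (hf_nonneg : ∀ x, 0 ≤ f x) (hf_prob : ∫ x, f x = 1)
    (hF : ∀ x, F x = ∫ t in Set.Iic x, f t) : Monotone F := by
  intro c d hcd
  rw [hF c, hF d]
  exact setIntegral_mono_set ((hfi' hf_prob).integrableOn)
    (Filter.Eventually.of_forall fun t => hf_nonneg t)
    (Filter.Eventually.of_forall (Iic_subset_Iic.mpr hcd))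

lemma F_nonneg (hf_nonneg : ∀ x, 0 ≤ f x)
    (hF : ∀ x, F x = ∫ t in Set.Iic x, f t) (x : ℝ) : 0 ≤ F x := by
  rw [hF x]
  exact setIntegral_nonneg measurableSet_Iic fun t _ => hf_nonneg t

lemma F_le_one (hf_nonneg : ∀ x, 0 ≤ f x) (hf_prob : ∫ x, f x = 1)
    (hF : ∀ x, F x = ∫ t in Set.Iic x, f t) (x : ℝ) : F x ≤ 1 := by
  rw [hF x, ← hf_prob]
  exact setIntegral_le_integral (hfi' hf_prob) (Filter.Eventually.of_forall fun t => hf_nonneg t)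

lemma F_meas (hf_nonneg : ∀ x, 0 ≤ f x) (hf_prob : ∫ x, f x = 1)
    (hF : ∀ x, F x = ∫ t in Set.Iic x, f t) : Measurable F :=
  (F_mono hf_nonneg hf_prob hF).measurable

lemma integral_Ioc (hf_prob : ∫ x, f x = 1)
    (hF : ∀ x, F x = ∫ t in Set.Iic x, f t) {c d : ℝ} (hcd : c ≤ d) :
    ∫ t in Set.Ioc c d, f t = F d - F c := by
  have h : Set.Iic c ∪ Set.Ioc c d = Set.Iic d := Set.Iic_union_Ioc_eq_Iic hcd
  have h2 := setIntegral_union (Set.Iic_disjoint_Ioc le_rfl) measurableSet_Ioc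
    ((hfi' hf_prob).integrableOn (s := Set.Iic c)) ((hfi' hf_prob).integrableOn (s := Set.Ioc c d))
  rw [h] at h2
  rw [hF d, hF c] at *
  linarith [h2]

lemma intOn (hf_meas : Measurable f) (hf_prob : ∫ x, f x = 1)
    {w : ℝ → ℝ} (hw : Measurable w) {K : ℝ} (hK : ∀ t, |w t| ≤ K) (ν : Measure ℝ)
    (hν : ν ≤ volume) :
    Integrable (fun t => w t * f t) ν := by
  refine Integrable.mono_measure ?_ hν
  refine Integrable.mono ((hfi' hf_prob).const_mul K) (hw.mul hf_meas).aestronglyMeasurable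
    (Filter.Eventually.of_forall fun t => ?_)
  simp only [Real.norm_eq_abs, abs_mul]
  exact mul_le_mul ((hK t).trans (le_abs_self K)) le_rfl (abs_nonneg _) (abs_nonneg _)

lemma wabs (n : ℕ) (e : ℝ) (h1 : ∀ x, 0 ≤ F x) (h2 : ∀ x, F x ≤ 1) (t : ℝ) :
    |(F t - F e) ^ n| ≤ 1 := by
  rw [abs_pow]
  refine pow_le_one₀ (abs_nonneg _) ?_
  rw [abs_le]; constructor <;> nlinarith [h1 t, h2 t, h1 e, h2 e]

lemma lemA (hf_nonneg : ∀ x, 0 ≤ f x) (hf_meas : Measurable f)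
    (hf_prob : ∫ x, f x = 1) (hF : ∀ x, F x = ∫ t in Set.Iic x, f t) :
    ∀ (n : ℕ) (c d : ℝ), c ≤ d →
      ∫ t in Set.Ioc c d, (F t - F c) ^ n * f t = (F d - F c) ^ (n + 1) / (n + 1) := by
  have hFmeas := F_meas hf_nonneg hf_prob hF
  have hF0 := F_nonneg hf_nonneg hF
  have hF1 := F_le_one hf_nonneg hf_prob hF
  intro n
  induction n with
  | zero =>
    intro c d hcd
    simp [integral_Ioc hf_prob hF hcd]
  | succ n IH =>
    intro c d hcd
    have hwmeas : ∀ e : ℝ, ∀ k : ℕ, Measurable fun t => (F t - F e) ^ k := fun e k =>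
      ((hFmeas.sub measurable_const).pow_const k)
    have hint : ∀ (k : ℕ) (e : ℝ) (ν : Measure ℝ), ν ≤ volume →
        Integrable (fun t => (F t - F e) ^ k * f t) ν := fun k e ν hν =>
      intOn hf_meas hf_prob (hwmeas e k) (wabs k e hF0 hF1) ν hν
    have hne : (n : ℝ) + 1 ≠ 0 := by positivity
    have key : ∫ t in Set.Ioc c d, (F t - F c) ^ (n + 1) * f t
        = ((n : ℝ) + 1) * ((F d - F c) * ((F d - F c) ^ (n + 1) / ((n : ℝ) + 1))
            - ∫ t in Set.Ioc c d, (F t - F c) ^ (n + 1) * f t) := by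
      have h1 : ∫ t in Set.Ioc c d, (F t - F c) ^ (n + 1) * f t
          = ∫ t in Set.Ioc c d, (((n : ℝ) + 1)
              * ∫ r in Set.Ioc c d, (if r ≤ t then (F r - F c) ^ n * f r else 0)) * f t := by
        refine setIntegral_congr_fun measurableSet_Ioc fun t ht => ?_
        have hinner : (∫ r in Set.Ioc c d, (if r ≤ t then (F r - F c) ^ n * f r else 0))
            = ∫ r in Set.Ioc c t, (F r - F c) ^ n * f r := by
          have hind : ∀ r, (if r ≤ t then (F r - F c) ^ n * f r else 0)
              = Set.indicator (Set.Iic t) (fun r => (F r - F c) ^ n * f r) r := by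
            intro r; simp [Set.indicator_apply, Set.mem_Iic]
          simp_rw [hind]
          rw [setIntegral_indicator measurableSet_Iic, Set.Ioc_inter_Iic,
            min_eq_right ht.2]
        rw [hinner, IH c t ht.1.le]
        field_simp
      conv_lhs => rw [h1]
      conv_lhs => simp only [mul_assoc]
      conv_lhs => rw [integral_const_mul]
      conv_lhs => simp only [← integral_mul_const]
      have h2 : Integrable
          (Function.uncurry fun t r : ℝ => (if r ≤ t then (F r - F c) ^ n * f r else 0) * f t)
          ((volume.restrict (Set.Ioc c d)).prod (volume.restrict (Set.Ioc c d))) := by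
        have hmeas : Measurable fun p : ℝ × ℝ =>
            (if p.2 ≤ p.1 then (F p.2 - F c) ^ n * f p.2 else 0) * f p.1 := by
          refine Measurable.mul ?_ (hf_meas.comp measurable_fst)
          exact Measurable.ite (measurableSet_le measurable_snd measurable_fst)
            (((hwmeas c n).comp measurable_snd).mul (hf_meas.comp measurable_snd))
            measurable_const
        refine Integrable.mono
          (g := fun p : ℝ × ℝ => f p.1 * f p.2) ?_ hmeas.aestronglyMeasurable
          (Filter.Eventually.of_forall fun p => ?_)
        · exact (hfi' hf_prob).restrict.mul_prod (hfi' hf_prob).restrict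
        · simp only [Function.uncurry, Real.norm_eq_abs, abs_mul]
          rw [mul_comm (|f p.1|) (|f p.2|)]
          refine mul_le_mul_of_nonneg_right ?_ (abs_nonneg _)
          split_ifs with h
          · rw [abs_mul]
            calc |(F p.2 - F c) ^ n| * |f p.2| ≤ 1 * |f p.2| :=
                  mul_le_mul_of_nonneg_right (wabs n c hF0 hF1 p.2) (abs_nonneg _)
              _ = |f p.2| := one_mul _
          · simp [abs_nonneg]
      conv_lhs => rw [integral_integral_swap h2]
      have h4 : EqOn
          (fun r => ∫ t in Set.Ioc c d, (if r ≤ t then (F r - F c) ^ n * f r else 0) * f t)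
          (fun r => (F d - F c) * ((F r - F c) ^ n * f r) - (F r - F c) ^ (n + 1) * f r)
          (Set.Ioc c d) := by
        intro r hr
        have hind : ∀ t, (if r ≤ t then (F r - F c) ^ n * f r else 0) * f t
            = Set.indicator (Set.Ici r) (fun t => (F r - F c) ^ n * f r * f t) t := by
          intro t; simp only [Set.indicator_apply, Set.mem_Ici]
          split_ifs <;> simp
        simp only []
        simp_rw [hind]
        rw [setIntegral_indicator measurableSet_Ici]
        have hset : Set.Ioc c d ∩ Set.Ici r = Set.Icc r d := by
          ext t
          simp only [Set.mem_inter_iff, Set.mem_Ioc, Set.mem_Ici, Set.mem_Icc]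
          constructor
          · rintro ⟨⟨_, h2⟩, h3⟩; exact ⟨h3, h2⟩
          · rintro ⟨h1, h2⟩; exact ⟨⟨lt_of_lt_of_le hr.1 h1, h2⟩, h1⟩
        rw [hset, integral_const_mul, integral_Icc_eq_integral_Ioc,
          integral_Ioc hf_prob hF hr.2]
        ring
      conv_lhs => rw [setIntegral_congr_fun measurableSet_Ioc h4]
      conv_lhs => rw [integral_sub (((hint n c _ Measure.restrict_le_self).const_mul _))
        (hint (n + 1) c _ Measure.restrict_le_self)]
      conv_lhs => rw [integral_const_mul, IH c d hcd]
    set J := ∫ t in Set.Ioc c d, (F t - F c) ^ (n + 1) * f t with hJ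
    have hne2 : (n : ℝ) + 2 ≠ 0 := by positivity
    push_cast
    field_simp at key ⊢
    linear_combination key

end MinMaxAux

namespace MinMaxAux
variable {f F : ℝ → ℝ}

lemma lemB (hf_nonneg : ∀ x, 0 ≤ f x) (hf_meas : Measurable f)
    (hf_prob : ∫ x, f x = 1) (hF : ∀ x, F x = ∫ t in Set.Iic x, f t) (d : ℝ) :
    ∀ (n : ℕ) (c : ℝ), c ≤ d →
      ∫ s in Set.Iic c, (F d - F s) ^ n * f s
        = (F d ^ (n + 1) - (F d - F c) ^ (n + 1)) / (n + 1) := by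
  have hFmeas := F_meas hf_nonneg hf_prob hF
  have hF0 := F_nonneg hf_nonneg hF
  have hF1 := F_le_one hf_nonneg hf_prob hF
  intro n
  induction n with
  | zero =>
    intro c hcd
    simp only [pow_zero, one_mul, pow_one, Nat.cast_zero, zero_add]
    rw [← hF c]
    ring
  | succ n IH =>
    intro c hcd
    have hwmeas : ∀ e : ℝ, ∀ k : ℕ, Measurable fun t => (F t - F e) ^ k := fun e k =>
      ((hFmeas.sub measurable_const).pow_const k)
    have hwmeas' : ∀ k : ℕ, Measurable fun t => (F d - F t) ^ k := fun k =>
      ((measurable_const.sub hFmeas).pow_const k)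
    have hwabs' : ∀ (k : ℕ) (t : ℝ), |(F d - F t) ^ k| ≤ 1 := by
      intro k t
      rw [abs_pow]
      refine pow_le_one₀ (abs_nonneg _) ?_
      rw [abs_le]; constructor <;> nlinarith [hF0 t, hF1 t, hF0 d, hF1 d]
    have hint : ∀ (k : ℕ) (ν : Measure ℝ), ν ≤ volume →
        Integrable (fun t => (F d - F t) ^ k * f t) ν := fun k ν hν =>
      intOn hf_meas hf_prob (hwmeas' k) (hwabs' k) ν hν
    have hne : (n : ℝ) + 1 ≠ 0 := by positivity
    have key : ∫ s in Set.Iic c, (F d - F s) ^ (n + 1) * f s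
        = (F d - F c) * ((F d ^ (n + 1) - (F d - F c) ^ (n + 1)) / ((n : ℝ) + 1))
          + (F d ^ (n + 1) / ((n : ℝ) + 1) * F c
            - 1 / ((n : ℝ) + 1) * ∫ s in Set.Iic c, (F d - F s) ^ (n + 1) * f s) := by
      have hring : ∀ s : ℝ, (F d - F s) ^ (n + 1) * f s
          = (F d - F c) * ((F d - F s) ^ n * f s)
            + ((F c - F s) * (F d - F s) ^ n) * f s := by
        intro s; ring
      have hi1 : Integrable (fun s => (F d - F c) * ((F d - F s) ^ n * f s))
          (volume.restrict (Set.Iic c)) := (hint n _ Measure.restrict_le_self).const_mul _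
      have hi2 : Integrable (fun s => ((F c - F s) * (F d - F s) ^ n) * f s)
          (volume.restrict (Set.Iic c)) := by
        refine intOn hf_meas hf_prob ((measurable_const.sub hFmeas).mul (hwmeas' n))
          (K := 1) (fun t => ?_) _ Measure.restrict_le_self
        simp only [Pi.mul_apply, Pi.sub_apply]; rw [abs_mul]
        refine mul_le_one₀ ?_ (abs_nonneg _) (hwabs' n t)
        rw [abs_le]; constructor <;> nlinarith [hF0 t, hF1 t, hF0 c, hF1 c]
      have step2 : EqOn (fun s => ((F c - F s) * (F d - F s) ^ n) * f s)
          (fun s => ∫ r in Set.Iic c,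
            (if s < r then f r else 0) * ((F d - F s) ^ n * f s)) (Set.Iic c) := by
        intro s hs
        have hind : ∀ r, (if s < r then f r else 0) * ((F d - F s) ^ n * f s)
            = Set.indicator (Set.Ioi s) (fun r => f r * ((F d - F s) ^ n * f s)) r := by
          intro r; simp only [Set.indicator_apply, Set.mem_Ioi]
          split_ifs <;> simp
        simp only []
        simp_rw [hind]
        rw [setIntegral_indicator measurableSet_Ioi, Set.inter_comm, Set.Ioi_inter_Iic,
          integral_mul_const, integral_Ioc hf_prob hF hs]
        ring
      have h2B : Integrable
          (Function.uncurry fun s r : ℝ => (if s < r then f r else 0) * ((F d - F s) ^ n * f s))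
          ((volume.restrict (Set.Iic c)).prod (volume.restrict (Set.Iic c))) := by
        have hmeas : Measurable fun p : ℝ × ℝ =>
            (if p.1 < p.2 then f p.2 else 0) * ((F d - F p.1) ^ n * f p.1) := by
          refine Measurable.mul ?_
            (((hwmeas' n).comp measurable_fst).mul (hf_meas.comp measurable_fst))
          exact Measurable.ite (measurableSet_lt measurable_fst measurable_snd)
            (hf_meas.comp measurable_snd) measurable_const
        refine Integrable.mono
          (g := fun p : ℝ × ℝ => f p.1 * f p.2) ?_ hmeas.aestronglyMeasurable
          (Filter.Eventually.of_forall fun p => ?_)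
        · exact (hfi' hf_prob).restrict.mul_prod (hfi' hf_prob).restrict
        · simp only [Function.uncurry, Real.norm_eq_abs, abs_mul]
          rw [mul_comm (|f p.1|) (|f p.2|)]
          have hb1 : |if p.1 < p.2 then f p.2 else 0| ≤ |f p.2| := by
            split_ifs <;> simp [abs_nonneg]
          have hb2 : |(F d - F p.1) ^ n| * |f p.1| ≤ |f p.1| := by
            calc |(F d - F p.1) ^ n| * |f p.1| ≤ 1 * |f p.1| :=
                  mul_le_mul_of_nonneg_right (hwabs' n p.1) (abs_nonneg _)
              _ = |f p.1| := one_mul _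
          calc |if p.1 < p.2 then f p.2 else 0| * (|(F d - F p.1) ^ n| * |f p.1|)
              ≤ |f p.2| * |f p.1| := by
                exact mul_le_mul hb1 hb2 (by positivity) (abs_nonneg _)
            _ = |f p.2| * |f p.1| := rfl
      have h4B : EqOn
          (fun r => ∫ s in Set.Iic c, (if s < r then f r else 0) * ((F d - F s) ^ n * f s))
          (fun r => f r * ((F d ^ (n + 1) - (F d - F r) ^ (n + 1)) / ((n : ℝ) + 1)))
          (Set.Iic c) := by
        intro r hr
        have hind : ∀ s, (if s < r then f r else 0) * ((F d - F s) ^ n * f s)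
            = Set.indicator (Set.Iio r) (fun s => f r * ((F d - F s) ^ n * f s)) s := by
          intro s; simp only [Set.indicator_apply, Set.mem_Iio]
          split_ifs <;> simp
        simp only []
        simp_rw [hind]
        have hsub : Set.Iio r ⊆ Set.Iic c := fun x hx => Set.mem_Iic.mpr (le_trans (le_of_lt (Set.mem_Iio.mp hx)) (Set.mem_Iic.mp hr))
        rw [setIntegral_indicator measurableSet_Iio,
          Set.inter_eq_self_of_subset_right hsub,
          setIntegral_congr_set Iio_ae_eq_Iic, integral_const_mul, IH r (hr.trans hcd)]
      have hring2 : ∀ r : ℝ, f r * ((F d ^ (n + 1) - (F d - F r) ^ (n + 1)) / ((n : ℝ) + 1))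
          = (F d ^ (n + 1) / ((n : ℝ) + 1)) * f r
            - (1 / ((n : ℝ) + 1)) * ((F d - F r) ^ (n + 1) * f r) := by
        intro r; field_simp
      conv_lhs => simp only [hring]
      conv_lhs => rw [integral_add hi1 hi2]
      conv_lhs => rw [integral_const_mul, IH c hcd]
      conv_lhs => rw [setIntegral_congr_fun measurableSet_Iic step2]
      conv_lhs => rw [integral_integral_swap h2B]
      conv_lhs => rw [setIntegral_congr_fun measurableSet_Iic h4B]
      conv_lhs => simp only [hring2]
      conv_lhs => rw [integral_sub (((hfi' hf_prob).restrict).const_mul _)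
        ((hint (n + 1) _ Measure.restrict_le_self).const_mul _)]
      conv_lhs => rw [integral_const_mul, integral_const_mul, ← hF c]
    set K := ∫ s in Set.Iic c, (F d - F s) ^ (n + 1) * f s with hK
    have hne2 : (n : ℝ) + 2 ≠ 0 := by positivity
    push_cast
    field_simp at key ⊢
    linear_combination key

end MinMaxAux

open MinMaxAux

/-- Let `f` be a probability density on ℝ with cdf `F`, and let
`μ = f·λ`. For `m ≥ 2`, the pushforward of `μ^{⊗m}` under
`x ↦ (min_k x_k, max_k x_k)` is absolutely continuous w.r.t. two-dimensional Lebesgue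
measure, with density `g(a,b) = m(m−1)(F b − F a)^{m−2} f a f b` for `a ≤ b`
and `g(a,b) = 0` for `a > b`. -/
theorem minmax_pushforward_density (f : ℝ → ℝ) (hf_nonneg : ∀ x, 0 ≤ f x)
    (hf_meas : Measurable f) (hf_prob : ∫ x, f x = 1)
    (F : ℝ → ℝ) (hF : ∀ x, F x = ∫ t in Set.Iic x, f t)
    (m : ℕ) (hm : 2 ≤ m) :
    Measure.map (fun x : Fin m → ℝ => (⨅ k, x k, ⨆ k, x k))
        (Measure.pi fun _ : Fin m => volume.withDensity fun x => ENNReal.ofReal (f x)) =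
      volume.withDensity fun q : ℝ × ℝ =>
        ENNReal.ofReal
          (if q.1 ≤ q.2 then
            (m : ℝ) * ((m : ℝ) - 1) * (F q.2 - F q.1) ^ (m - 2) * f q.1 * f q.2
          else 0) := by
  obtain ⟨n, rfl⟩ : ∃ n, m = n + 2 := ⟨m - 2, by omega⟩
  simp only [Nat.add_sub_cancel]
  have hFmono := F_mono hf_nonneg hf_prob hF
  have hFmeas := F_meas hf_nonneg hf_prob hF
  have hF0 := F_nonneg hf_nonneg hF
  have hF1 := F_le_one hf_nonneg hf_prob hF
  set μ : Measure ℝ := volume.withDensity fun x => ENNReal.ofReal (f x) with hμ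
  have hμs : ∀ s : Set ℝ, MeasurableSet s → (∀ᵐ t ∂(volume.restrict s), 0 ≤ f t) →
      μ s = ENNReal.ofReal (∫ t in s, f t) := by
    intro s hs hnn
    rw [hμ, withDensity_apply _ hs,
      ← ofReal_integral_eq_lintegral_ofReal ((hfi' hf_prob).restrict) hnn]
  have hμIic : ∀ b : ℝ, μ (Set.Iic b) = ENNReal.ofReal (F b) := by
    intro b
    rw [hμs _ measurableSet_Iic (Filter.Eventually.of_forall fun t => hf_nonneg t), ← hF b]
  have hμIoc : ∀ a b : ℝ, a ≤ b → μ (Set.Ioc a b) = ENNReal.ofReal (F b - F a) := by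
    intro a b hab
    rw [hμs _ measurableSet_Ioc (Filter.Eventually.of_forall fun t => hf_nonneg t),
      integral_Ioc hf_prob hF hab]
  have hμuniv : μ Set.univ = 1 := by
    rw [hμ, withDensity_apply _ MeasurableSet.univ, Measure.restrict_univ,
      ← ofReal_integral_eq_lintegral_ofReal (hfi' hf_prob)
        (Filter.Eventually.of_forall fun t => hf_nonneg t), hf_prob, ENNReal.ofReal_one]
  haveI : IsProbabilityMeasure μ := ⟨hμuniv⟩
  have hT : Measurable (fun x : Fin (n + 2) → ℝ => (⨅ k, x k, ⨆ k, x k)) :=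
    (Measurable.iInf fun k => measurable_pi_apply k).prodMk
      (Measurable.iSup fun k => measurable_pi_apply k)
  haveI : IsProbabilityMeasure
      (Measure.map (fun x : Fin (n + 2) → ℝ => (⨅ k, x k, ⨆ k, x k))
        (Measure.pi fun _ : Fin (n + 2) => μ)) :=
    Measure.isProbabilityMeasure_map hT.aemeasurable
  have hgen1 : MeasurableSpace.generateFrom (Set.range (Set.Iic : ℝ → Set ℝ))
      = borel ℝ := (borel_eq_generateFrom_Iic ℝ).symm
  have hgen : MeasurableSpace.generateFrom (Set.range (Set.Iic : ℝ → Set ℝ))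
      = Real.measurableSpace := by rw [hgen1]; exact BorelSpace.measurable_eq.symm
  have hspan : IsCountablySpanning (Set.range (Set.Iic : ℝ → Set ℝ)) := by
    refine ⟨fun k : ℕ => Set.Iic (k : ℝ), fun k => Set.mem_range_self _, ?_⟩
    rw [Set.iUnion_eq_univ_iff]
    intro x
    obtain ⟨k, hk⟩ := exists_nat_ge x
    exact ⟨k, hk⟩
  refine Measure.ext_of_generateFrom_of_iUnion
    (Set.image2 (· ×ˢ ·) (Set.range Set.Iic) (Set.range Set.Iic))
    (fun k : ℕ => Set.Iic (k : ℝ) ×ˢ Set.Iic (k : ℝ))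
    (generateFrom_eq_prod hgen hgen hspan hspan).symm
    (isPiSystem_Iic.prod isPiSystem_Iic) ?_ ?_ ?_ ?_
  · rw [Set.iUnion_eq_univ_iff]
    rintro ⟨x, y⟩
    obtain ⟨k, hk⟩ := exists_nat_ge (max x y)
    exact ⟨k, (le_max_left x y).trans hk, (le_max_right x y).trans hk⟩
  · intro k
    exact Set.mem_image2_of_mem (Set.mem_range_self _) (Set.mem_range_self _)
  · intro k
    exact measure_ne_top _ _
  rintro s ⟨s1, ⟨a, rfl⟩, s2, ⟨b, rfl⟩, rfl⟩
  have hL : Measure.map (fun x : Fin (n + 2) → ℝ => (⨅ k, x k, ⨆ k, x k))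
        (Measure.pi fun _ : Fin (n + 2) => μ) (Set.Iic a ×ˢ Set.Iic b)
      = ENNReal.ofReal (F b) ^ (n + 2)
        - ENNReal.ofReal (F b - F (min a b)) ^ (n + 2) := by
    rw [Measure.map_apply hT (measurableSet_Iic.prod measurableSet_Iic)]
    have hpre : (fun x : Fin (n + 2) → ℝ => (⨅ k, x k, ⨆ k, x k)) ⁻¹' (Set.Iic a ×ˢ Set.Iic b)
        = (Set.pi Set.univ fun _ => Set.Iic b) \ (Set.pi Set.univ fun _ => Set.Ioc a b) := by
      ext x
      simp only [Set.mem_preimage, Set.mem_prod, Set.mem_Iic, Set.mem_diff, Set.mem_pi,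
        Set.mem_univ, true_implies, Set.mem_Ioc]
      have hbdd_a : BddAbove (Set.range x) := (Set.finite_range x).bddAbove
      have hbdd_b : BddBelow (Set.range x) := (Set.finite_range x).bddBelow
      have hsup : (⨆ k, x k) ≤ b ↔ ∀ k, x k ≤ b := ciSup_le_iff hbdd_a
      have hinf : (⨅ k, x k) ≤ a ↔ ∃ k, x k ≤ a := by
        constructor
        · intro h
          obtain ⟨k, hk⟩ := exists_eq_ciInf_of_finite (f := x)
          exact ⟨k, le_trans (le_of_eq hk) h⟩
        · rintro ⟨k, hk⟩
          exact le_trans (ciInf_le hbdd_b k) hk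
      rw [hinf, hsup]
      constructor
      · rintro ⟨h1, h2⟩
        obtain ⟨k, hk⟩ := h1
        exact ⟨h2, fun hall => absurd hk (not_le.mpr (hall k).1)⟩
      · rintro ⟨hb, hnot⟩
        refine ⟨?_, hb⟩
        by_contra hno
        push_neg at hno
        exact hnot fun k => ⟨hno k, hb k⟩
    rw [hpre]
    have hsub : (Set.pi Set.univ fun _ : Fin (n + 2) => Set.Ioc a b)
        ⊆ (Set.pi Set.univ fun _ => Set.Iic b) :=
      Set.pi_mono fun i _ => Set.Ioc_subset_Iic_self
    rw [measure_diff hsub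
      ((MeasurableSet.univ_pi fun _ => measurableSet_Ioc).nullMeasurableSet)
      (measure_ne_top _ _)]
    rw [Measure.pi_pi, Measure.pi_pi]
    have hIoc' : μ (Set.Ioc a b) = ENNReal.ofReal (F b - F (min a b)) := by
      rcases le_total a b with h | h
      · rw [min_eq_left h]; exact hμIoc a b h
      · rw [min_eq_right h, Set.Ioc_eq_empty (not_lt.mpr h)]
        simp
    simp [hμIic b, hIoc', Finset.prod_const]
  rw [hL]
  have hc : min a b ≤ b := min_le_right a b
  have hwb : ∀ (k : ℕ) (e t : ℝ), |(F t - F e) ^ k| ≤ 1 := fun k e t => wabs k e hF0 hF1 t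
  have hwb' : ∀ (k : ℕ) (t : ℝ), |(F b - F t) ^ k| ≤ 1 := by
    intro k t
    rw [abs_pow]
    refine pow_le_one₀ (abs_nonneg _) ?_
    rw [abs_le]; constructor <;> nlinarith [hF0 t, hF1 t, hF0 b, hF1 b]
  have hRmeas : Measurable fun q : ℝ × ℝ => ENNReal.ofReal
      (if q.1 ≤ q.2 then
        ((n : ℝ) + 2) * ((n : ℝ) + 2 - 1) * (F q.2 - F q.1) ^ n * f q.1 * f q.2 else 0) := by
    refine Measurable.ennreal_ofReal ?_
    refine Measurable.ite (measurableSet_le measurable_fst measurable_snd) ?_ measurable_const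
    exact ((measurable_const.mul
      (((hFmeas.comp measurable_snd).sub (hFmeas.comp measurable_fst)).pow_const n)).mul
      (hf_meas.comp measurable_fst)).mul (hf_meas.comp measurable_snd)
  have hRn : (volume.withDensity fun q : ℝ × ℝ =>
      ENNReal.ofReal
        (if q.1 ≤ q.2 then (↑(n + 2) : ℝ) * ((↑(n + 2) : ℝ) - 1) * (F q.2 - F q.1) ^ n
          * f q.1 * f q.2 else 0)) (Set.Iic a ×ˢ Set.Iic b)
      = ENNReal.ofReal (F b ^ (n + 2) - (F b - F (min a b)) ^ (n + 2)) := by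
    rw [withDensity_apply _ (measurableSet_Iic.prod measurableSet_Iic)]
    rw [Measure.volume_eq_prod, ← Measure.prod_restrict]
    rw [lintegral_prod _ (by push_cast; exact hRmeas.aemeasurable)]
    have hinner : ∀ s : ℝ, (∫⁻ t in Set.Iic b, ENNReal.ofReal
        (if s ≤ t then (↑(n + 2) : ℝ) * ((↑(n + 2) : ℝ) - 1) * (F t - F s) ^ n
          * f s * f t else 0))
        = ENNReal.ofReal (if s ≤ b then ((n : ℝ) + 2) * ((F b - F s) ^ (n + 1) * f s) else 0) := by
      intro s
      have hind : ∀ t : ℝ, ENNReal.ofReal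
          (if s ≤ t then (↑(n + 2) : ℝ) * ((↑(n + 2) : ℝ) - 1) * (F t - F s) ^ n
            * f s * f t else 0)
          = (Set.Ici s).indicator (fun t => ENNReal.ofReal
              ((↑(n + 2) : ℝ) * ((↑(n + 2) : ℝ) - 1) * (F t - F s) ^ n * f s * f t)) t := by
        intro t
        by_cases h : s ≤ t <;> simp [Set.indicator_apply, Set.mem_Ici, h]
      simp only [hind]
      rw [lintegral_indicator measurableSet_Ici,
        Measure.restrict_restrict measurableSet_Ici, Set.Ici_inter_Iic]
      by_cases hsb : s ≤ b
      · rw [if_pos hsb, setLIntegral_congr (Ioc_ae_eq_Icc (a := s) (b := b)).symm]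
        have hiring : ∀ t : ℝ, (↑(n + 2) : ℝ) * ((↑(n + 2) : ℝ) - 1) * (F t - F s) ^ n
            * f s * f t
            = ((↑(n + 2) : ℝ) * ((↑(n + 2) : ℝ) - 1) * f s) * ((F t - F s) ^ n * f t) := by
          intro t; ring
        simp only [hiring]
        have hint2 : Integrable
            (fun t => ((↑(n + 2) : ℝ) * ((↑(n + 2) : ℝ) - 1) * f s) * ((F t - F s) ^ n * f t))
            (volume.restrict (Set.Ioc s b)) :=
          (intOn hf_meas hf_prob ((hFmeas.sub measurable_const).pow_const n)
            (hwb n s) _ Measure.restrict_le_self).const_mul _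
        have hnn2 : 0 ≤ᵐ[volume.restrict (Set.Ioc s b)]
            (fun t => ((↑(n + 2) : ℝ) * ((↑(n + 2) : ℝ) - 1) * f s)
              * ((F t - F s) ^ n * f t)) := by
          refine (ae_restrict_mem measurableSet_Ioc).mono fun t ht => ?_
          have h1 : (0 : ℝ) ≤ (↑(n + 2) : ℝ) * ((↑(n + 2) : ℝ) - 1) := by
            push_cast; nlinarith [Nat.cast_nonneg (α := ℝ) n]
          exact mul_nonneg (mul_nonneg h1 (hf_nonneg s))
            (mul_nonneg (pow_nonneg (sub_nonneg.mpr (hFmono ht.1.le)) n) (hf_nonneg t))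
        rw [← ofReal_integral_eq_lintegral_ofReal hint2 hnn2, integral_const_mul,
          lemA hf_nonneg hf_meas hf_prob hF n s b hsb]
        congr 1
        push_cast
        have hne : (n : ℝ) + 1 ≠ 0 := by positivity
        field_simp
        ring
      · rw [if_neg hsb, Set.Icc_eq_empty hsb, Measure.restrict_empty, lintegral_zero_measure,
          ENNReal.ofReal_zero]
    simp only [hinner]
    have hind2 : ∀ s : ℝ, ENNReal.ofReal
        (if s ≤ b then ((n : ℝ) + 2) * ((F b - F s) ^ (n + 1) * f s) else 0)
        = (Set.Iic b).indicator
            (fun s => ENNReal.ofReal (((n : ℝ) + 2) * ((F b - F s) ^ (n + 1) * f s))) s := by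
      intro s
      by_cases h : s ≤ b <;> simp [Set.indicator_apply, Set.mem_Iic, h]
    simp only [hind2]
    rw [lintegral_indicator measurableSet_Iic,
      Measure.restrict_restrict measurableSet_Iic, Set.Iic_inter_Iic, inf_comm b a]
    have hint3 : Integrable
        (fun s => ((n : ℝ) + 2) * ((F b - F s) ^ (n + 1) * f s))
        (volume.restrict (Set.Iic (min a b))) :=
      (intOn hf_meas hf_prob ((measurable_const.sub hFmeas).pow_const (n + 1))
        (hwb' (n + 1)) _ Measure.restrict_le_self).const_mul _
    have hnn3 : 0 ≤ᵐ[volume.restrict (Set.Iic (min a b))]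
        (fun s => ((n : ℝ) + 2) * ((F b - F s) ^ (n + 1) * f s)) := by
      refine (ae_restrict_mem measurableSet_Iic).mono fun s hs => ?_
      refine mul_nonneg (by positivity) (mul_nonneg
        (pow_nonneg (sub_nonneg.mpr (hFmono (le_trans hs hc))) _) (hf_nonneg s))
    rw [← ofReal_integral_eq_lintegral_ofReal hint3 hnn3, integral_const_mul,
      lemB hf_nonneg hf_meas hf_prob hF b (n + 1) (min a b) hc]
    congr 1
    push_cast
    have hne : (n : ℝ) + 2 ≠ 0 := by positivity
    field_simp
    ring
  push_cast at hRn ⊢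
  rw [hRn]
  rw [← ENNReal.ofReal_pow (hF0 b), ← ENNReal.ofReal_pow (sub_nonneg.mpr (hFmono hc)),
    ← ENNReal.ofReal_sub _ (pow_nonneg (sub_nonneg.mpr (hFmono hc)) _)]
end

section
/- The family ℰ consisting of all sets B([a],[b]) and all sets W([c]), for [a], [b], [c] ∈ 𝕀, is a topological basis for the subspace topology on 𝕀 inherited from the standard topology on ℝ². -/
/-- The family `ℰ` consisting of all sets
`B([a],[b]) = {(u,v) ∈ 𝕀 : b̲ < u < a̲, ā < v < b̄}` and all sets
`W([c]) = {(u,v) ∈ 𝕀 : c̲ < u ≤ v < c̄}`, for `[a], [b], [c] ∈ 𝕀`, is a topological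
basis for the subspace topology on `𝕀 = {(x̲,x̄) ∈ ℝ² : x̲ ≤ x̄}` inherited from ℝ². -/
theorem basis_of_intervalSpace :
    TopologicalSpace.IsTopologicalBasis
      {s : Set {p : ℝ × ℝ // p.1 ≤ p.2} |
        (∃ a b : {p : ℝ × ℝ // p.1 ≤ p.2},
          s = {x : {p : ℝ × ℝ // p.1 ≤ p.2} |
            b.1.1 < x.1.1 ∧ x.1.1 < a.1.1 ∧ a.1.2 < x.1.2 ∧ x.1.2 < b.1.2}) ∨
        (∃ c : {p : ℝ × ℝ // p.1 ≤ p.2},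
          s = {x : {p : ℝ × ℝ // p.1 ≤ p.2} | c.1.1 < x.1.1 ∧ x.1.2 < c.1.2})} := by
  have hc1 : Continuous fun x : {p : ℝ × ℝ // p.1 ≤ p.2} => x.1.1 :=
    continuous_fst.comp continuous_subtype_val
  have hc2 : Continuous fun x : {p : ℝ × ℝ // p.1 ≤ p.2} => x.1.2 :=
    continuous_snd.comp continuous_subtype_val
  apply TopologicalSpace.isTopologicalBasis_of_isOpen_of_nhds
  · rintro s (⟨a, b, rfl⟩ | ⟨c, rfl⟩)
    · exact (isOpen_lt continuous_const hc1).inter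
        ((isOpen_lt hc1 continuous_const).inter
          ((isOpen_lt continuous_const hc2).inter (isOpen_lt hc2 continuous_const)))
    · exact (isOpen_lt continuous_const hc1).inter (isOpen_lt hc2 continuous_const)
  · intro x u hxu hu
    obtain ⟨ε, εpos, hball⟩ := Metric.isOpen_iff.mp hu x hxu
    set x1 := x.1.1 with hx1
    set x2 := x.1.2 with hx2
    have hdist : ∀ y : {p : ℝ × ℝ // p.1 ≤ p.2},
        |y.1.1 - x1| < ε → |y.1.2 - x2| < ε → y ∈ Metric.ball x ε := by
      intro y h1 h2
      have : dist y x = max (dist y.1.1 x1) (dist y.1.2 x2) := by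
        rw [Subtype.dist_eq, Prod.dist_eq]
      simp only [Metric.mem_ball, this, Real.dist_eq]
      exact max_lt h1 h2
    rcases eq_or_lt_of_le x.2 with heq | hlt
    · -- x1 = x2, use W
      refine ⟨_, Or.inr ⟨⟨(x1 - ε/2, x2 + ε/2), by simp [hx1, hx2]; nlinarith [x.2]⟩, rfl⟩,
        ⟨by simp; linarith, by simp; linarith⟩, ?_⟩
      intro y hy
      obtain ⟨hy1, hy2⟩ := hy
      simp only at hy1 hy2
      apply hball
      have hy12 : y.1.1 ≤ y.1.2 := y.2
      apply hdist <;> rw [abs_sub_lt_iff] <;> constructor <;> nlinarith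
    · -- x1 < x2, use B
      set δ := min (ε/2) ((x2 - x1)/2) with hδ
      have hδpos : 0 < δ := lt_min (by linarith) (by linarith)
      have hδ1 : δ ≤ ε/2 := min_le_left _ _
      have hδ2 : δ ≤ (x2 - x1)/2 := min_le_right _ _
      refine ⟨_, Or.inl ⟨⟨(x1 + δ, x2 - δ), by simp; nlinarith⟩,
        ⟨(x1 - δ, x2 + δ), by simp; nlinarith⟩, rfl⟩,
        ⟨by simp; linarith, by simp; linarith, by simp; linarith, by simp; linarith⟩, ?_⟩
      intro y hy
      obtain ⟨h1, h2, h3, h4⟩ := hy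
      simp only at h1 h2 h3 h4
      apply hball
      apply hdist <;> rw [abs_sub_lt_iff] <;> constructor <;> nlinarith
end

section
/- The subspace topology on 𝕀 inherited from ℝ² is the smallest topology on 𝕀 containing all the sets W([c]) and all the complements (in 𝕀) of the containment sets {[x'] ⊆ [c]}, for [c] ∈ 𝕀; that is, it equals the topology generated by { W([c]) : [c] ∈ 𝕀 } ∪ { 𝕀 \ {[x'] ⊆ [c]} : [c] ∈ 𝕀 }. -/
open TopologicalSpace Set

private abbrev II := {p : ℝ × ℝ // p.1 ≤ p.2}

private abbrev SS : Set (Set II) :=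
  {s : Set II | ∃ c : II, s = {x : II | c.1.1 < x.1.1 ∧ x.1.2 < c.1.2}} ∪
  {s : Set II | ∃ c : II, s = {x : II | c.1.1 ≤ x.1.1 ∧ x.1.2 ≤ c.1.2}ᶜ}

private lemma hW (c : II) : GenerateOpen SS {x : II | c.1.1 < x.1.1 ∧ x.1.2 < c.1.2} :=
  .basic _ (Or.inl ⟨c, rfl⟩)

private lemma hC (c : II) : GenerateOpen SS {x : II | c.1.1 ≤ x.1.1 ∧ x.1.2 ≤ c.1.2}ᶜ :=
  .basic _ (Or.inr ⟨c, rfl⟩)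

private lemma gen_iUnion {f : ℕ → Set II} (h : ∀ n, GenerateOpen SS (f n)) :
    GenerateOpen SS (⋃ n, f n) := by
  rw [← sUnion_range]
  exact .sUnion _ (by rintro _ ⟨n, rfl⟩; exact h n)

private lemma h2lt (b : ℝ) : GenerateOpen SS {x : II | x.1.2 < b} := by
  have : {x : II | x.1.2 < b} = ⋃ n : ℕ, {x : II | b - (n + 1) < x.1.1 ∧ x.1.2 < b} := by
    ext x
    simp only [mem_iUnion, mem_setOf_eq]
    constructor
    · intro hx
      obtain ⟨n, hn⟩ := exists_nat_gt (b - x.1.1)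
      exact ⟨n, by linarith, hx⟩
    · rintro ⟨n, _, hx⟩; exact hx
  rw [this]
  exact gen_iUnion fun n => hW ⟨(b - (n + 1), b), by
    have : (0:ℝ) ≤ (n:ℝ) + 1 := by positivity
    simpa using by linarith⟩

private lemma h1gt (a : ℝ) : GenerateOpen SS {x : II | a < x.1.1} := by
  have : {x : II | a < x.1.1} = ⋃ n : ℕ, {x : II | a < x.1.1 ∧ x.1.2 < a + (n + 1)} := by
    ext x
    simp only [mem_iUnion, mem_setOf_eq]
    constructor
    · intro hx
      obtain ⟨n, hn⟩ := exists_nat_gt (x.1.2 - a)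
      exact ⟨n, hx, by linarith⟩
    · rintro ⟨n, hx, _⟩; exact hx
  rw [this]
  exact gen_iUnion fun n => hW ⟨(a, a + (n + 1)), by
    have : (0:ℝ) ≤ (n:ℝ) + 1 := by positivity
    simpa using by linarith⟩

private lemma h1lt (b : ℝ) : GenerateOpen SS {x : II | x.1.1 < b} := by
  have : {x : II | x.1.1 < b} =
      ⋃ n : ℕ, ({x : II | x.1.2 < b + n} ∩ {x : II | b ≤ x.1.1 ∧ x.1.2 ≤ b + n}ᶜ) := by
    ext x
    simp only [mem_iUnion, mem_inter_iff, mem_setOf_eq, mem_compl_iff, not_and, not_le]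
    constructor
    · intro hx
      obtain ⟨n, hn⟩ := exists_nat_gt (x.1.2 - b)
      exact ⟨n, by linarith, fun h => absurd hx (not_lt.mpr h)⟩
    · rintro ⟨n, h1, h2⟩
      by_contra h
      exact absurd h1 (not_lt.mpr (le_of_lt (h2 (not_lt.mp h))))
  rw [this]
  exact gen_iUnion fun n =>
    (h2lt (b + n)).inter _ _ (hC ⟨(b, b + n), by simp⟩)

private lemma h2gt (a : ℝ) : GenerateOpen SS {x : II | a < x.1.2} := by
  have : {x : II | a < x.1.2} =
      ⋃ n : ℕ, ({x : II | a - n < x.1.1} ∩ {x : II | a - n ≤ x.1.1 ∧ x.1.2 ≤ a}ᶜ) := by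
    ext x
    simp only [mem_iUnion, mem_inter_iff, mem_setOf_eq, mem_compl_iff, not_and, not_le]
    constructor
    · intro hx
      obtain ⟨n, hn⟩ := exists_nat_gt (a - x.1.1)
      exact ⟨n, by linarith, fun _ => hx⟩
    · rintro ⟨n, h1, h2⟩
      exact h2 (le_of_lt h1)
  rw [this]
  exact gen_iUnion fun n =>
    (h1gt (a - n)).inter _ _ (hC ⟨(a - n, a), by simp⟩)

/-- The subspace topology on `𝕀 = {(x̲,x̄) ∈ ℝ² : x̲ ≤ x̄}` inherited
from ℝ² equals the topology generated by the sets `W([c]) = {(u,v) ∈ 𝕀 : c̲ < u ≤ v < c̄}`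
together with the complements (in 𝕀) of the containment sets
`{[x'] ⊆ [c]} = {(u,v) ∈ 𝕀 : c̲ ≤ u ≤ v ≤ c̄}`, for `[c] ∈ 𝕀`. -/
theorem topology_generated_by_W_and_containment_complements :
    (inferInstance : TopologicalSpace {p : ℝ × ℝ // p.1 ≤ p.2}) =
      TopologicalSpace.generateFrom
        ({s : Set {p : ℝ × ℝ // p.1 ≤ p.2} |
            ∃ c : {p : ℝ × ℝ // p.1 ≤ p.2},
              s = {x : {p : ℝ × ℝ // p.1 ≤ p.2} | c.1.1 < x.1.1 ∧ x.1.2 < c.1.2}} ∪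
         {s : Set {p : ℝ × ℝ // p.1 ≤ p.2} |
            ∃ c : {p : ℝ × ℝ // p.1 ≤ p.2},
              s = {x : {p : ℝ × ℝ // p.1 ≤ p.2} | c.1.1 ≤ x.1.1 ∧ x.1.2 ≤ c.1.2}ᶜ}) := by
  apply le_antisymm
  · apply le_generateFrom
    rintro s (⟨c, rfl⟩ | ⟨c, rfl⟩)
    · have : {x : II | c.1.1 < x.1.1 ∧ x.1.2 < c.1.2}
          = Subtype.val ⁻¹' (Ioi c.1.1 ×ˢ Iio c.1.2) := rfl
      rw [this]
      exact (isOpen_Ioi.prod isOpen_Iio).preimage continuous_subtype_val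
    · have : {x : II | c.1.1 ≤ x.1.1 ∧ x.1.2 ≤ c.1.2}
          = Subtype.val ⁻¹' (Ici c.1.1 ×ˢ Iic c.1.2) := rfl
      rw [this]
      exact ((isClosed_Ici.prod isClosed_Iic).preimage continuous_subtype_val).isOpen_compl
  · show generateFrom SS ≤ _
    rw [show (inferInstance : TopologicalSpace II)
        = TopologicalSpace.induced (Subtype.val : II → ℝ × ℝ) inferInstance from rfl,
      ← continuous_iff_le_induced]
    have hc1 : @Continuous II ℝ (generateFrom SS) _ (fun x : II => x.1.1) := by
      rw [OrderTopology.topology_eq_generate_intervals (α := ℝ)]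
      refine continuous_generateFrom_iff.mpr ?_
      rintro s ⟨a, rfl | rfl⟩
      · exact h1gt a
      · exact h1lt a
    have hc2 : @Continuous II ℝ (generateFrom SS) _ (fun x : II => x.1.2) := by
      rw [OrderTopology.topology_eq_generate_intervals (α := ℝ)]
      refine continuous_generateFrom_iff.mpr ?_
      rintro s ⟨a, rfl | rfl⟩
      · exact h2gt a
      · exact h2lt a
    exact @Continuous.prodMk ℝ ℝ II _ _ (generateFrom SS) _ _ hc1 hc2
end
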